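/- Let p : M̃ → M be the universal cover of a path-connected, locally path-connected space M with π₁(M) ≅ ℤ/kℤ finite, and let a connected compact group G act on M with a fixed point x₀. Then the G-action lifts to a G-action on M̃, and the fixed point set of the lifted action is the full preimage p⁻¹(Fix(M; G)). -/

import Mathlib

open Set Topology

section helpers

variable {E X : Type*} [TopologicalSpace E] [TopologicalSpace X] {p : E → X}

theorem IsCoveringMap.nonempty_fiber_of (hp : IsCoveringMap p) (x : X)
    (h : ∀ U : Set X, IsOpen U → x ∈ U → ∃ e, p e ∈ U) : Nonempty ↑(p ⁻¹' {x}) := by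
  obtain ⟨_, U, hxU, hUo, -, H, -⟩ := hp x
  obtain ⟨e, he⟩ := h U hUo hxU
  exact ⟨(H ⟨e, he⟩).2⟩

theorem IsCoveringMap.exists_lift_Icc (hp : IsCoveringMap p) (γ : ℝ → X) (hγ : Continuous γ)
    (e : E) (he : p e = γ 0) :
    ∃ Γ : ℝ → E, Continuous Γ ∧ Set.EqOn (p ∘ Γ) γ (Set.Icc 0 1) ∧ Γ 0 = e := by
  classical
  set A : Set ℝ := {t | t ∈ Icc (0:ℝ) 1 ∧
    ∃ Γ : ℝ → E, Continuous Γ ∧ Set.EqOn (p ∘ Γ) γ (Set.Icc 0 t) ∧ Γ 0 = e} with hA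
  have h0A : (0:ℝ) ∈ A := by
    refine ⟨⟨le_refl _, zero_le_one⟩, fun _ => e, continuous_const, ?_, rfl⟩
    intro r hr
    have : r = 0 := le_antisymm hr.2 hr.1
    simp [this, he]
  have hbdd : BddAbove A := ⟨1, fun t ht => ht.1.2⟩
  have step : ∀ u ∈ Icc (0:ℝ) 1,
      (∀ ε > (0:ℝ), ∃ t ∈ A, u - ε < t ∧ t ≤ u) → ∃ δ > (0:ℝ), min 1 (u + δ) ∈ A := by
    intro u hu happrox
    haveI : Nonempty ↑(p ⁻¹' {γ u}) := hp.nonempty_fiber_of (γ u) (fun U hU hxU => by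
      obtain ⟨δ', hδ', hb⟩ := Metric.isOpen_iff.mp (hU.preimage hγ) u hxU
      obtain ⟨t, ⟨⟨ht0, _⟩, Γt, _, hΓtlift, _⟩, htgt, htle⟩ := happrox δ' hδ'
      refine ⟨Γt t, ?_⟩
      rw [show p (Γt t) = γ t from hΓtlift ⟨ht0, le_refl t⟩]
      apply hb
      rw [Real.ball_eq_Ioo]; constructor <;> linarith)
    set T := (hp (γ u)).toTrivialization with hT
    have hTb : γ u ∈ T.baseSet := (hp (γ u)).mem_toTrivialization_baseSet
    have hO : IsOpen (γ ⁻¹' T.baseSet) := T.open_baseSet.preimage hγ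
    obtain ⟨δ, δpos, hball⟩ := Metric.isOpen_iff.mp hO u hTb
    obtain ⟨t, htA, htgt, htle⟩ := happrox (δ/2) (by positivity)
    refine ⟨δ/2, by positivity, ?_⟩
    set w := min (1:ℝ) (u + δ/2) with hw
    have htw : t ≤ w := le_min htA.1.2 (htle.trans (by linarith))
    have hIcc : Icc t w ⊆ Metric.ball u δ := by
      intro r hr
      rw [Real.ball_eq_Ioo]
      constructor
      · linarith [hr.1]
      · have := hr.2
        have : r ≤ u + δ/2 := le_trans this (min_le_right _ _)
        linarith
    have hIccB : ∀ r ∈ Icc t w, γ r ∈ T.baseSet := fun r hr => hball (hIcc hr)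
    obtain ⟨⟨ht0, ht1⟩, Γt, hΓtc, hΓtlift, hΓt0⟩ := htA
    have hpt : p (Γt t) = γ t := hΓtlift ⟨ht0, le_refl t⟩
    have hsrc : Γt t ∈ T.source := T.mem_source.mpr (by rw [hpt]; exact hIccB t ⟨le_refl t, htw⟩)
    set c := (T (Γt t)).2 with hc
    set clamp : ℝ → ℝ := fun r => max t (min r w) with hclamp
    have hclampc : Continuous clamp := continuous_const.max (continuous_id.min continuous_const)
    have hclampmem : ∀ r, clamp r ∈ Icc t w := fun r =>
      ⟨le_max_left _ _, max_le htw (min_le_right _ _)⟩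
    have hmemT : ∀ r, (γ (clamp r), c) ∈ T.target := fun r =>
      T.mem_target.mpr (hIccB _ (hclampmem r))
    set β : ℝ → E := fun r => T.toOpenPartialHomeomorph.symm (γ (clamp r), c) with hβ
    have hβc : Continuous β := by
      apply T.toOpenPartialHomeomorph.continuousOn_symm.comp_continuous
        ((hγ.comp hclampc).prodMk continuous_const) hmemT
    have hclampt : clamp t = t := by
      simp only [hclamp]
      rw [min_eq_left htw, max_self]
    have hβt : β t = Γt t := by
      have h1 : (γ t, c) = T (Γt t) := by
        apply Prod.ext
        · simp only [hc]
          rw [T.coe_fst' (by rw [hpt]; exact hIccB t ⟨le_refl t, htw⟩), hpt]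
        · rfl
      simp only [hβ, hclampt, h1]
      exact T.toOpenPartialHomeomorph.left_inv hsrc
    set Γ' : ℝ → E := fun r => if r ≤ t then Γt r else β r with hΓ'
    have hΓ'c : Continuous Γ' := by
      apply Continuous.if_le hΓtc hβc continuous_id continuous_const
      intro r hr
      have hrt : r = t := hr
      rw [hrt, hβt]
    refine ⟨⟨le_min zero_le_one (by linarith), min_le_left _ _⟩, Γ', hΓ'c, ?_, ?_⟩
    · intro r hr
      by_cases hrt : r ≤ t
      · simp only [Function.comp, hΓ', if_pos hrt]
        exact hΓtlift ⟨hr.1, hrt⟩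
      · push_neg at hrt
        simp only [Function.comp, hΓ', if_neg (not_le.mpr hrt)]
        have hclampr : clamp r = r := by
          simp only [hclamp]
          rw [min_eq_left hr.2, max_eq_right hrt.le]
        rw [show p (β r) = γ (clamp r) from T.proj_symm_apply (hmemT r), hclampr]
    · simp only [hΓ', if_pos ht0, hΓt0]
  -- now the sup argument
  set u := sSup A with hu
  have hune : A.Nonempty := ⟨0, h0A⟩
  have hu0 : 0 ≤ u := le_csSup hbdd h0A
  have hu1 : u ≤ 1 := csSup_le hune fun t ht => ht.1.2
  have happrox : ∀ ε > (0:ℝ), ∃ t ∈ A, u - ε < t ∧ t ≤ u := by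
    intro ε hε
    obtain ⟨t, htA, ht⟩ := exists_lt_of_lt_csSup hune (by linarith : u - ε < u)
    exact ⟨t, htA, ht, le_csSup hbdd htA⟩
  obtain ⟨δ, hδ, hminA⟩ := step u ⟨hu0, hu1⟩ happrox
  have hle : min 1 (u + δ) ≤ u := le_csSup hbdd hminA
  have hu_eq : u = 1 := by
    rcases le_or_gt 1 (u + δ) with h | h
    · have : min 1 (u+δ) = 1 := min_eq_left h
      rw [this] at hle
      exact le_antisymm hu1 hle
    · exfalso
      have : min 1 (u+δ) = u + δ := min_eq_right h.le
      rw [this] at hle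
      linarith
  rw [hu_eq] at hminA
  have h1A : (1:ℝ) ∈ A := by
    rcases hminA with ⟨_, Γ, hc, hl, h0⟩
    refine ⟨⟨zero_le_one, le_refl _⟩, Γ, hc, fun r hr => hl ⟨hr.1, hr.2.trans (le_min le_rfl (by linarith))⟩, h0⟩
  obtain ⟨_, Γ, hc, hl, h0⟩ := h1A
  exact ⟨Γ, hc, hl, h0⟩

theorem IsCoveringMap.exists_lift_real (hp : IsCoveringMap p) (γ : ℝ → X) (hγ : Continuous γ)
    (hb0 : ∀ r ≤ (0:ℝ), γ r = γ 0) (hb1 : ∀ r, (1:ℝ) ≤ r → γ r = γ 1)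
    (e : E) (he : p e = γ 0) :
    ∃ Γ : ℝ → E, Continuous Γ ∧ (∀ r, p (Γ r) = γ r) ∧ Γ 0 = e := by
  obtain ⟨Γ, hc, hl, h0'⟩ := hp.exists_lift_Icc γ hγ e he
  set cl : ℝ → ℝ := fun r => max 0 (min r 1) with hcl
  have hclc : Continuous cl := continuous_const.max (continuous_id.min continuous_const)
  have hclmem : ∀ r, cl r ∈ Icc (0:ℝ) 1 := fun r =>
    ⟨le_max_left _ _, max_le zero_le_one (min_le_right _ _)⟩
  refine ⟨fun r => Γ (cl r), hc.comp hclc, ?_, ?_⟩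
  · intro r
    show p (Γ (cl r)) = γ r
    rcases le_or_gt r 0 with h | h
    · have h1 : cl r = 0 := by
        simp only [hcl]
        rw [min_eq_left (h.trans zero_le_one), max_eq_left h]
      rw [h1, show p (Γ 0) = γ 0 from hl ⟨le_refl _, zero_le_one⟩, ← hb0 r h]
    · rcases le_or_gt r 1 with h2 | h2
      · have h1 : cl r = r := by
          simp only [hcl]
          rw [min_eq_left h2, max_eq_right h.le]
        rw [h1]
        exact hl ⟨h.le, h2⟩
      · have h1 : cl r = 1 := by
          simp only [hcl]
          rw [min_eq_right h2.le, max_eq_right zero_le_one]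
        rw [h1, show p (Γ 1) = γ 1 from hl ⟨zero_le_one, le_refl _⟩, ← hb1 r h2.le]
  · show Γ (cl 0) = e
    have h1 : cl 0 = 0 := by
      simp only [hcl]
      rw [min_eq_left zero_le_one, max_self]
    rw [h1, h0']

theorem IsCoveringMap.exists_lift_family {Y : Type*} [TopologicalSpace Y]
    (hp : IsCoveringMap p) (H : Y × ℝ → X) (hH : Continuous H)
    (hH0 : ∀ y (r : ℝ), r ≤ 0 → H (y, r) = H (y, 0))
    (hH1 : ∀ y (r : ℝ), 1 ≤ r → H (y, r) = H (y, 1))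
    (h₀ : Y → E) (hh₀c : Continuous h₀) (hh₀ : ∀ y, p (h₀ y) = H (y, 0)) :
    ∃ L : Y × ℝ → E, Continuous L ∧ (∀ z, p (L z) = H z) ∧ ∀ y, L (y, 0) = h₀ y := by
  classical
  have hex : ∀ y, ∃ Γ : ℝ → E, Continuous Γ ∧ (∀ r, p (Γ r) = H (y, r)) ∧ Γ 0 = h₀ y := by
    intro y
    exact hp.exists_lift_real (fun r => H (y, r))
      (hH.comp (continuous_const.prodMk continuous_id)) (hH0 y) (hH1 y) (h₀ y) (hh₀ y)
  choose Γf hΓc hΓl hΓ0 using hex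
  set L : Y × ℝ → E := fun z => Γf z.1 z.2 with hL
  have hLl : ∀ z, p (L z) = H z := fun z => hΓl z.1 z.2
  -- key: local continuity around every parameter point
  have key : ∀ y₀ : Y, ∃ N, IsOpen N ∧ y₀ ∈ N ∧ ContinuousOn L (N ×ˢ Iic (2:ℝ)) := by
    intro y₀
    set B : Set ℝ := {t | t ∈ Icc (0:ℝ) 2 ∧
      ∃ N, IsOpen N ∧ y₀ ∈ N ∧ ContinuousOn L (N ×ˢ Iic t)} with hB
    have h0B : (0:ℝ) ∈ B := by
      refine ⟨⟨le_refl _, by norm_num⟩, univ, isOpen_univ, mem_univ _, ?_⟩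
      have heq : EqOn L (fun z => h₀ z.1) (univ ×ˢ Iic (0:ℝ)) := by
        intro z hz
        have hz2 : z.2 ≤ 0 := hz.2
        have hconst : Γf z.1 z.2 = Γf z.1 0 := by
          refine hp.constOn_of_comp isPreconnected_Iic (hΓc z.1).continuousOn ?_ hz2 (le_refl (0:ℝ))
          intro a ha a' ha'
          rw [hΓl, hΓl, hH0 z.1 a ha, hH0 z.1 a' ha']
        show Γf z.1 z.2 = h₀ z.1
        rw [hconst, hΓ0]
      exact ((hh₀c.comp continuous_fst).continuousOn).congr heq
    have hbdd : BddAbove B := ⟨2, fun t ht => ht.1.2⟩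
    have step : ∀ u ∈ Icc (0:ℝ) 2,
        (∀ ε > (0:ℝ), ∃ t ∈ B, u - ε < t ∧ t ≤ u) → ∃ δ > (0:ℝ), min 2 (u + δ) ∈ B := by
      intro u hu happrox
      haveI hdisc : DiscreteTopology ↑(p ⁻¹' {H (y₀, u)}) := (hp (H (y₀, u))).1
      haveI : Nonempty ↑(p ⁻¹' {H (y₀, u)}) := ⟨⟨L (y₀, u), hLl _⟩⟩
      set T := (hp (H (y₀, u))).toTrivialization with hT
      have hTb : H (y₀, u) ∈ T.baseSet := (hp (H (y₀, u))).mem_toTrivialization_baseSet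
      obtain ⟨N₁, o, hN₁o, ho, hyN₁, huo, hsub⟩ :=
        isOpen_prod_iff.mp (T.open_baseSet.preimage hH) y₀ u hTb
      obtain ⟨δ, δpos, hball⟩ := Metric.isOpen_iff.mp ho u huo
      have hHB : ∀ y ∈ N₁, ∀ r ∈ Metric.ball u δ, H (y, r) ∈ T.baseSet := by
        intro y hy r hr
        exact hsub (mk_mem_prod hy (hball hr))
      obtain ⟨t, htB, htgt, htle⟩ := happrox (δ/2) (by positivity)
      obtain ⟨⟨ht0, ht2⟩, N₂, hN₂o, hyN₂, hLc₂⟩ := htB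
      refine ⟨δ/2, by positivity, ?_⟩
      set w := min (2:ℝ) (u + δ/2) with hw
      have htw : t ≤ w := le_min ht2 (htle.trans (by linarith))
      have hIcc : Icc t w ⊆ Metric.ball u δ := by
        intro r hr
        rw [Real.ball_eq_Ioo]
        refine ⟨by linarith [hr.1], ?_⟩
        have : r ≤ u + δ/2 := le_trans hr.2 (min_le_right _ _)
        linarith
      have htmem : ∀ y ∈ N₁, ∀ s ∈ Icc t w, H (y, s) ∈ T.baseSet := by
        intro y hy s hs
        exact hHB y hy s (hIcc hs)
      -- the map y ↦ L (y, t) is continuous on N₂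
      have hgc : ContinuousOn (fun y => L (y, t)) N₂ := by
        apply hLc₂.comp ((continuous_id.prodMk continuous_const).continuousOn)
        intro y hy
        exact mk_mem_prod hy (le_refl t)
      have hsrc : ∀ y ∈ N₁ ∩ N₂, L (y, t) ∈ T.source := by
        intro y hy
        rw [T.mem_source, hLl]
        exact htmem y hy.1 t ⟨le_refl t, htw⟩
      have hφc : ContinuousOn (fun y => (T (L (y, t))).2) (N₁ ∩ N₂) := by
        apply (continuous_snd.comp_continuousOn _)
        apply (T.toOpenPartialHomeomorph.continuousOn.comp
          (hgc.mono inter_subset_right) hsrc)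
      set c := (T (L (y₀, t))).2 with hc
      set N₃ := (N₁ ∩ N₂) ∩ (fun y => (T (L (y, t))).2) ⁻¹' {c} with hN₃
      have hN₃o : IsOpen N₃ :=
        hφc.isOpen_inter_preimage (hN₁o.inter hN₂o) (isOpen_discrete {c})
      have hyN₃ : y₀ ∈ N₃ := ⟨⟨hyN₁, hyN₂⟩, rfl⟩
      have hN₃sub : N₃ ⊆ N₁ ∩ N₂ := inter_subset_left
      -- the identification on N₃ ×ˢ Icc t w
      have hEq : ∀ y ∈ N₃, ∀ s ∈ Icc t w,
          L (y, s) = T.toOpenPartialHomeomorph.symm (H (y, s), c) := by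
        intro y hy
        have hmemT : ∀ s ∈ Icc t w, (H (y, s), c) ∈ T.target := by
          intro s hs
          exact T.mem_target.mpr (htmem y (hN₃sub hy).1 s hs)
        have e1 : ContinuousOn (fun s => L (y, s)) (Icc t w) := (hΓc y).continuousOn
        have e2 : ContinuousOn (fun s : ℝ => T.toOpenPartialHomeomorph.symm (H (y, s), c))
            (Icc t w) := by
          apply T.toOpenPartialHomeomorph.continuousOn_symm.comp
          · exact ((hH.comp (continuous_const.prodMk continuous_id)).prodMk
              continuous_const).continuousOn
          · intro s hs
            exact hmemT s hs
        have hcomp : EqOn (p ∘ fun s => L (y, s))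
            (p ∘ fun s : ℝ => T.toOpenPartialHomeomorph.symm (H (y, s), c)) (Icc t w) := by
          intro s hs
          show p (L (y, s)) = p (T.toOpenPartialHomeomorph.symm (H (y, s), c))
          rw [hLl, T.proj_symm_apply (hmemT s hs)]
        have hat : L (y, t) = T.toOpenPartialHomeomorph.symm (H (y, t), c) := by
          have h1 : (H (y, t), c) = T (L (y, t)) := by
            apply Prod.ext
            · rw [T.coe_fst' (by rw [hLl]; exact htmem y (hN₃sub hy).1 t ⟨le_refl t, htw⟩), hLl]
            · exact (hy.2 : (T (L (y, t))).2 = c).symm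
          rw [h1]
          exact (T.toOpenPartialHomeomorph.left_inv (hsrc y (hN₃sub hy))).symm
        exact hp.eqOn_of_comp_eqOn isPreconnected_Icc e1 e2 hcomp ⟨le_refl t, htw⟩ hat
      -- continuity on N₃ ×ˢ Icc t w
      have hC2 : ContinuousOn L (N₃ ×ˢ Icc t w) := by
        have hbig : ContinuousOn (fun z : Y × ℝ => T.toOpenPartialHomeomorph.symm (H z, c))
            (N₃ ×ˢ Icc t w) := by
          apply T.toOpenPartialHomeomorph.continuousOn_symm.comp
            ((hH.prodMk continuous_const).continuousOn)
          intro z hz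
          exact T.mem_target.mpr (htmem z.1 (hN₃sub hz.1).1 z.2 hz.2)
        apply hbig.congr
        intro z hz
        exact hEq z.1 hz.1 z.2 hz.2
      -- glue
      refine ⟨⟨le_min (by norm_num) (by linarith), min_le_left _ _⟩, N₃, hN₃o, hyN₃, ?_⟩
      intro z hz
      have hzy : z.1 ∈ N₃ := hz.1
      have hzs : z.2 ≤ w := hz.2
      have hsub2 : N₃ ×ˢ Iic w ⊆ (N₃ ×ˢ Iic t) ∪ (N₃ ×ˢ Icc t w) := by
        intro z' hz'
        rcases le_or_gt z'.2 t with h | h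
        · exact Or.inl (mk_mem_prod hz'.1 h)
        · exact Or.inr (mk_mem_prod hz'.1 ⟨h.le, hz'.2⟩)
      have piece1 : ContinuousWithinAt L (N₃ ×ˢ Iic t) z := by
        rcases le_or_gt z.2 t with h | h
        · exact ((hLc₂.mono (prod_mono (hN₃sub.trans inter_subset_right) (le_refl _)))
            z (mk_mem_prod hzy h))
        · apply continuousWithinAt_of_notMem_closure
          rw [closure_prod_eq]
          intro hcl
          have h2 := hcl.2
          rw [isClosed_Iic.closure_eq] at h2
          exact absurd h2 (not_le.mpr h)
      have piece2 : ContinuousWithinAt L (N₃ ×ˢ Icc t w) z := by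
        rcases le_or_gt t z.2 with h | h
        · exact hC2 z (mk_mem_prod hzy ⟨h, hzs⟩)
        · apply continuousWithinAt_of_notMem_closure
          rw [closure_prod_eq]
          intro hcl
          have h2 := hcl.2
          rw [isClosed_Icc.closure_eq] at h2
          exact absurd h2.1 (not_le.mpr h)
      exact (piece1.union piece2).mono hsub2
    -- sup argument
    set u := sSup B with hu
    have hbne : B.Nonempty := ⟨0, h0B⟩
    have hu0 : 0 ≤ u := le_csSup hbdd h0B
    have hu2 : u ≤ 2 := csSup_le hbne fun t ht => ht.1.2
    have happrox : ∀ ε > (0:ℝ), ∃ t ∈ B, u - ε < t ∧ t ≤ u := by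
      intro ε hε
      obtain ⟨t, htB, ht⟩ := exists_lt_of_lt_csSup hbne (by linarith : u - ε < u)
      exact ⟨t, htB, ht, le_csSup hbdd htB⟩
    obtain ⟨δ, hδ, hminB⟩ := step u ⟨hu0, hu2⟩ happrox
    have hle : min 2 (u + δ) ≤ u := le_csSup hbdd hminB
    have hu_eq : u = 2 := by
      rcases le_or_gt 2 (u + δ) with h | h
      · rw [min_eq_left h] at hle
        exact le_antisymm hu2 hle
      · rw [min_eq_right h.le] at hle
        linarith
    rw [hu_eq] at hminB
    rw [min_eq_left (by linarith : (2:ℝ) ≤ 2 + δ)] at hminB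
    obtain ⟨_, N, hNo, hyN, hLc⟩ := hminB
    exact ⟨N, hNo, hyN, hLc⟩
  -- assemble global continuity
  have hconst1 : ∀ y (r : ℝ), 1 ≤ r → L (y, r) = L (y, 1) := by
    intro y r hr
    refine hp.constOn_of_comp isPreconnected_Ici (hΓc y).continuousOn ?_ hr (le_refl (1:ℝ))
    intro a ha a' ha'
    show p (Γf y a) = p (Γf y a')
    rw [hΓl, hΓl, hH1 y a ha, hH1 y a' ha']
  have hLcont : Continuous L := by
    rw [continuous_iff_continuousAt]
    intro z₀
    obtain ⟨N, hNo, hyN, hLc⟩ := key z₀.1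
    have hKeq : (fun z : Y × ℝ => L (z.1, min z.2 (3/2))) = L := by
      funext z
      rcases le_or_gt z.2 (3/2) with h | h
      · rw [min_eq_left h]
      · rw [min_eq_right h.le, hconst1 z.1 z.2 (by linarith), hconst1 z.1 (3/2) (by norm_num)]
    rw [← hKeq]
    have hφc : Continuous (fun z : Y × ℝ => (z.1, min z.2 (3/2))) :=
      continuous_fst.prodMk (continuous_snd.min continuous_const)
    show ContinuousAt (L ∘ fun z : Y × ℝ => (z.1, min z.2 (3/2))) z₀
    apply ContinuousAt.comp _ hφc.continuousAt
    apply hLc.continuousAt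
    exact prod_mem_nhds (hNo.mem_nhds hyN)
      (Iic_mem_nhds (by linarith [min_le_right z₀.2 (3/2 : ℝ)] : min z₀.2 (3/2 : ℝ) < 2))
  exact ⟨L, hLcont, hLl, fun y => hΓ0 y⟩

/-- A space admitting a local homeomorphism into a locally path-connected space is
locally path connected. -/
theorem IsLocalHomeomorph.locPathConnectedSpace_aux [LocallyPathConnectedSpace X]
    (hp : IsLocalHomeomorph p) : LocallyPathConnectedSpace E := by
  constructor
  intro x
  rw [Filter.hasBasis_self]
  intro t ht
  obtain ⟨φ, hxφ, hφ⟩ := hp x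
  obtain ⟨t', ht', hto, hxt'⟩ := mem_nhds_iff.mp ht
  set o := t' ∩ φ.source with ho
  have hoo : IsOpen o := hto.inter φ.open_source
  have hxo : x ∈ o := ⟨hxt', hxφ⟩
  have himo : IsOpen (φ '' o) := φ.isOpen_image_of_subset_source hoo inter_subset_right
  have hφxo : φ x ∈ φ '' o := mem_image_of_mem _ hxo
  obtain ⟨S, ⟨hS𝓝, hSpc, hSsub⟩, -⟩ :=
    (pathConnected_subset_basis himo hφxo).mem_iff.mp (himo.mem_nhds hφxo)
  have hStgt : S ⊆ φ.target := hSsub.trans ((image_mono inter_subset_right).trans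
    (by rw [φ.image_source_eq_target]))
  refine ⟨φ.symm '' S, ?_, ?_, ?_⟩
  · -- φ.symm '' S ∈ 𝓝 x
    rw [φ.symm_image_eq_source_inter_preimage hStgt]
    rw [mem_nhds_iff]
    obtain ⟨S', hS'sub, hS'o, hφxS'⟩ := mem_nhds_iff.mp hS𝓝
    refine ⟨φ.source ∩ φ ⁻¹' S', ?_, φ.continuousOn.isOpen_inter_preimage φ.open_source hS'o,
      ⟨hxφ, hφxS'⟩⟩
    exact inter_subset_inter_right _ (preimage_mono hS'sub)
  · exact hSpc.image' (φ.continuousOn_symm.mono hStgt)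
  · -- φ.symm '' S ⊆ t
    intro z hz
    obtain ⟨y, hyS, rfl⟩ := hz
    have : y ∈ φ '' o := hSsub hyS
    obtain ⟨w, hwo, rfl⟩ := this
    rw [φ.left_inv hwo.2]
    exact ht' hwo.1

/-- Homotopic paths have lifts (over `ℝ`, via `Path.extend`) with the same endpoint. -/
theorem IsCoveringMap.lift_endpoint_eq_of_homotopic (hp : IsCoveringMap p) {a b : X}
    (γ δ : Path a b) (h : γ.Homotopic δ) (e : E)
    {Γ Δ : ℝ → E} (hΓc : Continuous Γ) (hΓl : ∀ r, p (Γ r) = γ.extend r) (hΓ0 : Γ 0 = e)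
    (hΔc : Continuous Δ) (hΔl : ∀ r, p (Δ r) = δ.extend r) (hΔ0 : Δ 0 = e) :
    Γ 1 = Δ 1 := by
  haveI : PreconnectedSpace unitInterval := Subtype.preconnectedSpace isPreconnected_Icc
  obtain ⟨K⟩ := h
  set Hm : unitInterval × ℝ → X := fun z => K (z.1, Set.projIcc 0 1 zero_le_one z.2) with hHm
  have hHmc : Continuous Hm :=
    K.continuous.comp (continuous_fst.prodMk (continuous_projIcc.comp continuous_snd))
  have hH0 : ∀ (s : unitInterval) (r : ℝ), r ≤ 0 → Hm (s, r) = Hm (s, 0) := by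
    intro s r hr
    simp only [hHm]
    rw [Set.projIcc_of_le_left _ hr, Set.projIcc_left]
  have hH1 : ∀ (s : unitInterval) (r : ℝ), 1 ≤ r → Hm (s, r) = Hm (s, 1) := by
    intro s r hr
    simp only [hHm]
    rw [Set.projIcc_of_right_le _ hr, Set.projIcc_right]
  have hK0 : ∀ s : unitInterval, K (s, 0) = a := by
    intro s
    have := K.eq_fst s (show (0 : unitInterval) ∈ ({0, 1} : Set unitInterval) by simp)
    simpa using this
  have hK1 : ∀ s : unitInterval, K (s, 1) = b := by
    intro s
    have := K.eq_fst s (show (1 : unitInterval) ∈ ({0, 1} : Set unitInterval) by simp)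
    simpa using this
  have hh₀ : ∀ s : unitInterval, p e = Hm (s, 0) := by
    intro s
    simp only [hHm]
    rw [Set.projIcc_left]
    rw [show p e = a from by rw [← hΓ0, hΓl, Path.extend_of_le_zero _ (le_refl 0)]]
    exact (hK0 s).symm
  obtain ⟨L, hLc, hLl, hL0⟩ := hp.exists_lift_family Hm hHmc hH0 hH1 (fun _ => e)
    continuous_const hh₀
  -- the slice at parameter s is a lift of the corresponding path
  have hslice : ∀ (s : unitInterval) (Θ : ℝ → E), Continuous Θ →
      (∀ r, p (Θ r) = Hm (s, r)) → Θ 0 = e → ∀ r, Θ r = L (s, r) := by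
    intro s Θ hΘc hΘl hΘ0 r
    have := hp.eq_of_comp_eq hΘc (hLc.comp (continuous_const.prodMk continuous_id))
      (by funext r'; show p (Θ r') = p (L (s, r')); rw [hΘl, hLl]) 0
      (by show Θ 0 = L (s, 0); rw [hΘ0]; exact (hL0 s).symm)
    exact congrFun this r
  have hΓeq : Γ 1 = L (0, 1) := by
    apply hslice 0 Γ hΓc _ hΓ0
    intro r
    rw [hΓl]
    show γ.extend r = K ((0 : unitInterval), Set.projIcc 0 1 zero_le_one r)
    rw [K.apply_zero]
    rfl
  have hΔeq : Δ 1 = L (1, 1) := by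
    apply hslice 1 Δ hΔc _ hΔ0
    intro r
    rw [hΔl]
    show δ.extend r = K ((1 : unitInterval), Set.projIcc 0 1 zero_le_one r)
    rw [K.apply_one]
    rfl
  -- endpoints: continuous map into a fiber over the connected interval
  have hconst : L (0, 1) = L (1, 1) := by
    apply hp.const_of_comp (hLc.comp (continuous_id.prodMk continuous_const))
    intro s s'
    show p (L (s, 1)) = p (L (s', 1))
    rw [hLl, hLl]
    show Hm (s, 1) = Hm (s', 1)
    simp only [hHm]
    rw [Set.projIcc_right]
    exact (hK1 s).trans (hK1 s').symm
  rw [hΓeq, hΔeq, hconst]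

theorem Path.trans_extend {x y z : X} (a : Path x y) (b : Path y z) (r : ℝ) :
    (a.trans b).extend r = if r ≤ 1/2 then a.extend (2*r) else b.extend (2*r-1) := by
  rcases lt_or_ge r 0 with h | h
  · rw [Path.extend_of_le_zero _ h.le, if_pos (by linarith), Path.extend_of_le_zero _ (by linarith)]
  rcases le_or_gt r 1 with h1 | h1
  · rw [Path.extend_apply _ ⟨h, h1⟩, Path.trans_apply]
    split_ifs with h2
    · rw [Path.extend_apply _ ⟨by linarith, by linarith⟩]
    · rw [Path.extend_apply _ ⟨by push_neg at h2; linarith, by linarith⟩]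
  · rw [Path.extend_of_one_le _ h1.le, if_neg (by push_neg; linarith),
      Path.extend_of_one_le _ (by linarith)]

end helpers

/-- Bredon's lifting theorem (specialized): let `p : M' → M` be the universal cover of a
path-connected, locally path-connected space `M` whose fundamental group is isomorphic to
the finite cyclic group `ℤ/kℤ`, and let a compact connected topological group `G` act
continuously on `M` with a fixed point `x₀`.  Then the `G`-action lifts to a continuous
`G`-action on `M'` covering the given action, and the fixed point set of the lifted action
is the full preimage of the fixed point set downstairs. -/
theorem bredon_lifting_of_group_action {M' M G : Type}
    [TopologicalSpace M'] [TopologicalSpace M]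
    [PathConnectedSpace M] [LocallyPathConnectedSpace M] [SimplyConnectedSpace M']
    (p : M' → M) (hp : IsCoveringMap p) (hsurj : Function.Surjective p)
    (x₀ : M) (k : ℕ) (hk : 0 < k)
    (hπ₁ : Nonempty (FundamentalGroup M x₀ ≃* Multiplicative (ZMod k)))
    [TopologicalSpace G] [Group G] [IsTopologicalGroup G] [CompactSpace G] [ConnectedSpace G]
    [MulAction G M] [ContinuousSMul G M]
    (hfix : ∀ g : G, g • x₀ = x₀) :
    ∃ σ : G → M' → M',
      (∀ g, Continuous (σ g)) ∧
      (∀ x, σ 1 x = x) ∧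
      (∀ g h x, σ (g * h) x = σ g (σ h x)) ∧
      (∀ g x, p (σ g x) = g • p x) ∧
      {x : M' | ∀ g : G, σ g x = x} = p ⁻¹' {m : M | ∀ g : G, g • m = m} := by
  classical
  haveI hlpc : LocallyPathConnectedSpace M' := hp.isLocalHomeomorph.locPathConnectedSpace_aux
  obtain ⟨e₀, he₀⟩ := hsurj x₀
  -- base paths
  set pa : ∀ x : M', Path e₀ x := fun x => PathConnectedSpace.somePath e₀ x with hpa
  -- the continuous map (g • p ·)
  have hsmulc : ∀ g : G, Continuous (fun m : M => g • m) := fun g =>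
    continuous_smul.comp (continuous_const.prodMk continuous_id)
  have hgpc : ∀ g : G, Continuous (fun z : M' => g • p z) := fun g =>
    (hsmulc g).comp hp.continuous
  -- choose lifts of g • p ∘ (pa x)
  have lift_ex : ∀ (g : G) (x : M'), ∃ Γ : ℝ → M', Continuous Γ ∧
      (∀ r, p (Γ r) = g • p ((pa x).extend r)) ∧ Γ 0 = e₀ := by
    intro g x
    apply hp.exists_lift_real (γ := fun r => g • p ((pa x).extend r))
    · exact (hsmulc g).comp (hp.continuous.comp (pa x).continuous_extend)
    · intro r hr
      rw [Path.extend_of_le_zero _ hr, Path.extend_zero]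
    · intro r hr
      rw [Path.extend_of_one_le _ hr, Path.extend_one]
    · show p e₀ = g • p ((pa x).extend 0)
      rw [Path.extend_zero, he₀, hfix g]
  choose Λ hΛc hΛl hΛ0 using lift_ex
  set σ : G → M' → M' := fun g x => Λ g x 1 with hσ
  -- key endpoint lemma: any lift of g • p ∘ η for any path η : e₀ ⇝ x ends at σ g x
  have endpt : ∀ (g : G) (x : M') (η : Path e₀ x) (Θ : ℝ → M'), Continuous Θ →
      (∀ r, p (Θ r) = g • p (η.extend r)) → Θ 0 = e₀ → Θ 1 = σ g x := by
    intro g x η Θ hc hl h0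
    have hf : Continuous (fun z : M' => g • p z) := hgpc g
    have hom : (η.map hf).Homotopic ((pa x).map hf) :=
      Path.Homotopic.map (SimplyConnectedSpace.paths_homotopic η (pa x)) ⟨_, hf⟩
    have hext : ∀ (ζ : Path e₀ x) (r : ℝ), (ζ.map hf).extend r = g • p (ζ.extend r) := by
      intro ζ r
      rcases le_or_gt r 0 with h | h
      · rw [Path.extend_of_le_zero _ h, Path.extend_of_le_zero _ h]
      rcases le_or_gt r 1 with h1 | h1
      · rw [Path.extend_apply _ ⟨h.le, h1⟩, Path.extend_apply _ ⟨h.le, h1⟩]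
        rfl
      · rw [Path.extend_of_one_le _ h1.le, Path.extend_of_one_le _ h1.le]
    exact hp.lift_endpoint_eq_of_homotopic (η.map hf) ((pa x).map hf) hom e₀
      hc (fun r => by rw [hl r, hext]) h0
      (hΛc g x) (fun r => by rw [hΛl g x r, hext]) (hΛ0 g x)
  -- property (4)
  have prop4 : ∀ g x, p (σ g x) = g • p x := by
    intro g x
    show p (Λ g x 1) = g • p x
    rw [hΛl g x 1, Path.extend_one]
  -- property (2)
  have prop2 : ∀ x, σ 1 x = x := by
    intro x
    have := endpt 1 x (pa x) (fun r => (pa x).extend r) (pa x).continuous_extend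
      (fun r => (one_smul G _).symm) (Path.extend_zero _)
    exact this.symm.trans (Path.extend_one _)
  -- property (3)
  have prop3 : ∀ g h x, σ (g * h) x = σ g (σ h x) := by
    intro g h x
    have hcont : Continuous fun t : unitInterval => Λ h x t :=
      (hΛc h x).comp continuous_subtype_val
    set η : Path e₀ (σ h x) := ⟨⟨fun t => Λ h x t, hcont⟩, hΛ0 h x, rfl⟩ with hη
    have hηext : ∀ r : ℝ, p (η.extend r) = h • p ((pa x).extend r) := by
      intro r
      rcases le_or_gt r 0 with hr | hr
      · rw [Path.extend_of_le_zero _ hr, Path.extend_of_le_zero _ hr, he₀, hfix h]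
      rcases le_or_gt r 1 with hr1 | hr1
      · rw [Path.extend_apply _ ⟨hr.le, hr1⟩]
        exact hΛl h x r
      · rw [Path.extend_of_one_le _ hr1.le, Path.extend_of_one_le _ hr1.le]
        exact prop4 h x
    have := endpt g (σ h x) η (Λ (g*h) x) (hΛc (g*h) x)
      (fun r => by rw [hΛl (g*h) x r, mul_smul, ← hηext r]) (hΛ0 (g*h) x)
    exact this
  -- property (1): continuity
  have prop1 : ∀ g, Continuous (σ g) := by
    intro g
    rw [continuous_iff_continuousAt]
    intro x₁
    haveI hdisc : DiscreteTopology ↑(p ⁻¹' {g • p x₁}) := (hp (g • p x₁)).1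
    haveI : Nonempty ↑(p ⁻¹' {g • p x₁}) := ⟨⟨σ g x₁, prop4 g x₁⟩⟩
    set T := (hp (g • p x₁)).toTrivialization with hT
    have hTb : g • p x₁ ∈ T.baseSet := (hp (g • p x₁)).mem_toTrivialization_baseSet
    have hUo : IsOpen {z : M' | g • p z ∈ T.baseSet} := T.open_baseSet.preimage (hgpc g)
    have hx₁U : x₁ ∈ {z : M' | g • p z ∈ T.baseSet} := hTb
    obtain ⟨W, ⟨hW𝓝, hWpc, hWsub⟩, -⟩ :=
      (pathConnected_subset_basis hUo hx₁U).mem_iff.mp (hUo.mem_nhds hx₁U)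
    have hWx₁ : x₁ ∈ W := mem_of_mem_nhds hW𝓝
    have hpσ : p (σ g x₁) = g • p x₁ := prop4 g x₁
    have hsrc : σ g x₁ ∈ T.source := T.mem_source.mpr (by rw [hpσ]; exact hTb)
    set c := (T (σ g x₁)).2 with hc
    have claim : ∀ w ∈ W, σ g w = T.toOpenPartialHomeomorph.symm (g • p w, c) := by
      intro w hw
      obtain hJ := hWpc.joinedIn x₁ hWx₁ w hw
      set d : Path x₁ w := hJ.somePath with hd
      have hdW : ∀ t, d t ∈ W := hJ.somePath_mem
      have hdext : ∀ r, d.extend r ∈ W := by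
        intro r
        rcases le_or_gt r 0 with h | h
        · rw [Path.extend_of_le_zero _ h]; exact hWx₁
        rcases le_or_gt r 1 with h1 | h1
        · rw [Path.extend_apply _ ⟨h.le, h1⟩]; exact hdW _
        · rw [Path.extend_of_one_le _ h1.le]; exact hw
      have hdbase : ∀ r, (g • p (d.extend r), c) ∈ T.target := fun r =>
        T.mem_target.mpr (hWsub (hdext r))
      set β : ℝ → M' := fun r => T.toOpenPartialHomeomorph.symm (g • p (d.extend (2*r - 1)), c)
        with hβ
      have hβc : Continuous β := by
        apply T.toOpenPartialHomeomorph.continuousOn_symm.comp_continuous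
        · exact (((hgpc g).comp (d.continuous_extend.comp
            ((continuous_const.mul continuous_id).sub continuous_const))).prodMk
            continuous_const)
        · intro r
          exact hdbase _
      have hβhalf : β (1/2) = σ g x₁ := by
        have h1 : (2 : ℝ) * (1/2) - 1 = 0 := by norm_num
        simp only [hβ, h1]
        rw [Path.extend_zero]
        have h2 : (g • p x₁, c) = T (σ g x₁) := by
          apply Prod.ext
          · rw [T.coe_fst' (by rw [hpσ]; exact hTb), hpσ]
          · rfl
        rw [h2]
        exact T.toOpenPartialHomeomorph.left_inv hsrc
      set Θ : ℝ → M' := fun r => if r ≤ 1/2 then Λ g x₁ (2*r) else β r with hΘ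
      have hΘc : Continuous Θ := by
        apply Continuous.if_le ((hΛc g x₁).comp (continuous_const.mul continuous_id)) hβc
          continuous_id continuous_const
        intro r hr
        have : r = 1/2 := hr
        rw [this, hβhalf]
        norm_num
        rfl
      have hΘl : ∀ r, p (Θ r) = g • p (((pa x₁).trans d).extend r) := by
        intro r
        rw [Path.trans_extend]
        simp only [hΘ]
        split_ifs with h
        · exact hΛl g x₁ (2*r)
        · show p (β r) = _
          simp only [hβ]
          rw [T.proj_symm_apply (hdbase _)]
      have hΘ0 : Θ 0 = e₀ := by
        simp only [hΘ, if_pos (by norm_num : (0:ℝ) ≤ 1/2)]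
        rw [mul_zero, hΛ0]
      have := endpt g w ((pa x₁).trans d) Θ hΘc hΘl hΘ0
      rw [← this]
      simp only [hΘ, hβ, if_neg (by norm_num : ¬ (1:ℝ) ≤ 1/2)]
      norm_num
    -- conclude continuity at x₁
    have hcongr : (fun w => T.toOpenPartialHomeomorph.symm (g • p w, c)) =ᶠ[nhds x₁] σ g := by
      filter_upwards [hW𝓝] with w hw
      exact (claim w hw).symm
    apply ContinuousAt.congr _ hcongr
    apply ContinuousAt.comp
    · apply T.toOpenPartialHomeomorph.symm.continuousAt
      rw [OpenPartialHomeomorph.symm_source]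
      exact T.mem_target.mpr hTb
    · exact ((hgpc g).prodMk continuous_const).continuousAt
  -- fixed point set
  have fixset : {x : M' | ∀ g : G, σ g x = x} = p ⁻¹' {m : M | ∀ g : G, g • m = m} := by
    ext x
    simp only [mem_setOf_eq, mem_preimage]
    constructor
    · intro hx g
      rw [← prop4 g x, hx g]
    · intro hx g
      -- use the covering homotopy theorem with parameter space G
      set Hm : G × ℝ → M := fun z => z.1 • p ((pa x).extend z.2) with hHm
      have hHmc : Continuous Hm := continuous_smul.comp (continuous_fst.prodMk
        (hp.continuous.comp ((pa x).continuous_extend.comp continuous_snd)))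
      obtain ⟨L, hLc, hLl, hL0⟩ := hp.exists_lift_family Hm hHmc
        (fun y r hr => by simp only [hHm]; rw [Path.extend_of_le_zero _ hr, Path.extend_zero])
        (fun y r hr => by simp only [hHm]; rw [Path.extend_of_one_le _ hr, Path.extend_one])
        (fun _ => e₀) continuous_const
        (fun y => by simp only [hHm]; rw [Path.extend_zero, he₀, hfix y])
      have hslice : ∀ g' : G, σ g' x = L (g', 1) := by
        intro g'
        have := hp.eq_of_comp_eq (hΛc g' x)
          (hLc.comp (continuous_const.prodMk continuous_id))
          (by funext r; show p (Λ g' x r) = p (L (g', r)); rw [hΛl g' x r, hLl (g', r)]) 0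
          (by show Λ g' x 0 = L (g', 0); rw [hΛ0, hL0])
        exact congrFun this 1
      have hconst : L (g, 1) = L (1, 1) := by
        apply hp.const_of_comp (hLc.comp (continuous_id.prodMk continuous_const))
        intro a a'
        show p (L (a, 1)) = p (L (a', 1))
        rw [hLl (a, 1), hLl (a', 1)]
        show a • p ((pa x).extend 1) = a' • p ((pa x).extend 1)
        rw [Path.extend_one, hx a, hx a']
      rw [hslice g, hconst, ← hslice 1, prop2]
  exact ⟨σ, prop1, prop2, prop3, prop4, fixset⟩
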